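/- Let T_s be a DFS arborescence of a DAG G rooted at s spanning all descendants of s. If s1 and s2 are two distinct children of s in T_s, u ∈ T_{s1} and v ∈ T_{s2}, then s is a junction of u and v in G, and s is the lowest common ancestor of u and v in T_s. -/

import Mathlib

variable {V : Type*}

/-- A directed graph (given as a relation) is acyclic: no nontrivial closed directed walk. -/
def Acyclic (G : V → V → Prop) : Prop := Irreflexive (Relation.TransGen G)

/-- `l` is a directed path in `G` from `a` to `b`: consecutive vertices are joined by arcs
of `G` and no vertex is repeated. -/
def IsDipath (G : V → V → Prop) (l : List V) (a b : V) : Prop :=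
  l.Chain' G ∧ l.head? = some a ∧ l.getLast? = some b ∧ l.Nodup

/-- The internal vertices of a path (all vertices except the two endpoints). -/
def internalVerts (l : List V) : List V := l.tail.dropLast

/-- `s` is a junction of the pair of distinct vertices `u, v` in `G`: there are directed
paths from `s` to `u` and from `s` to `v` sharing no vertex other than `s`. -/
def IsJunction (G : V → V → Prop) (s u v : V) : Prop :=
  u ≠ v ∧ ∃ p q : List V, IsDipath G p s u ∧ IsDipath G q s v ∧
    ∀ x, x ∈ p → x ∈ q → x = s

/-- `z` is the lowest common ancestor of `u` and `v` in the tree (arborescence) `T`: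
a common ancestor that is a descendant of every common ancestor. -/
def IsTreeLCA (T : V → V → Prop) (u v z : V) : Prop :=
  Relation.ReflTransGen T z u ∧ Relation.ReflTransGen T z v ∧
    ∀ y, Relation.ReflTransGen T y u → Relation.ReflTransGen T y v →
      Relation.ReflTransGen T y z

/-- `s` is a lowest common ancestor of `u, v` in the DAG `G`: a junction of `u, v` such
that there is no directed path from `s` to any other junction of `u, v`. -/
def IsLCA (G : V → V → Prop) (s u v : V) : Prop :=
  IsJunction G s u v ∧
    ∀ s', s' ≠ s → IsJunction G s' u v → ¬ Relation.TransGen G s s'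

/-- A DFS arborescence of `G` rooted at `s`, spanning all descendants of `s`, together
with its post-order numbering and the standard structural properties of depth-first
search: tree arcs are graph arcs, the root has no parent, parents are unique, every
`G`-descendant of `s` is in the tree, `post` is injective on the tree, `post` strictly
decreases from a vertex to its proper tree descendants, the post-order numbers of each
subtree form a contiguous interval, and every graph arc between tree vertices is a
tree/forward arc, a back arc, or a (post-order decreasing) cross arc. -/
structure DFSArborescence (G : V → V → Prop) (s : V) where
  T : V → V → Prop
  post : V → ℕ
  sub : ∀ ⦃a b⦄, T a b → G a b
  root_no_parent : ∀ a, ¬ T a s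
  unique_parent : ∀ ⦃a b c⦄, T a b → T c b → a = c
  verts_reach : ∀ ⦃a b⦄, T a b → Relation.ReflTransGen T s a
  spans : ∀ ⦃v⦄, Relation.ReflTransGen G s v → Relation.ReflTransGen T s v
  post_inj : ∀ ⦃u v⦄, Relation.ReflTransGen T s u → Relation.ReflTransGen T s v →
      post u = post v → u = v
  post_desc : ∀ ⦃u v⦄, Relation.ReflTransGen T s u → Relation.TransGen T u v →
      post v < post u
  post_contig : ∀ ⦃u v x⦄, Relation.ReflTransGen T s u → Relation.ReflTransGen T u v →
      Relation.ReflTransGen T s x → post v ≤ post x → post x ≤ post u →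
      Relation.ReflTransGen T u x
  arc_classify : ∀ ⦃u v⦄, G u v → Relation.ReflTransGen T s u →
      Relation.ReflTransGen T s v →
      Relation.ReflTransGen T u v ∨ Relation.ReflTransGen T v u ∨ post v < post u


/-- ancestors of a vertex in a unique-parent forest are comparable -/
lemma tree_comparable {T : V → V → Prop}
    (hup : ∀ ⦃a b c⦄, T a b → T c b → a = c)
    {a b u : V} (ha : Relation.ReflTransGen T a u) (hb : Relation.ReflTransGen T b u) :
    Relation.ReflTransGen T a b ∨ Relation.ReflTransGen T b a := by
  induction ha generalizing b with
  | refl => exact Or.inr hb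
  | @tail c u' h₁ h₂ ih =>
    rcases hb.cases_tail with rfl | ⟨d, hbd, hdu⟩
    · exact Or.inl (h₁.tail h₂)
    · exact ih (hup hdu h₂ ▸ hbd)

/-- a list forming a chain along a ReflTransGen witness -/
lemma exists_chain_list {T : V → V → Prop} {a b : V} (h : Relation.ReflTransGen T a b) :
    ∃ l : List V, l.Chain' T ∧ l.head? = some a ∧ l.getLast? = some b ∧
      ∀ x ∈ l, Relation.ReflTransGen T a x ∧ Relation.ReflTransGen T x b := by
  induction h using Relation.ReflTransGen.head_induction_on with
  | refl =>
    refine ⟨[b], List.isChain_singleton b, by simp, by simp, ?_⟩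
    intro x hx
    simp only [List.mem_singleton] at hx
    subst hx
    exact ⟨Relation.ReflTransGen.refl, Relation.ReflTransGen.refl⟩
  | @head a' c hac hcb ih =>
    obtain ⟨l, hc, hh, hl, hm⟩ := ih
    cases l with
    | nil => simp at hh
    | cons c' l' =>
      have hc' : c' = c := by simpa using hh
      refine ⟨a' :: c' :: l', ?_, rfl, by simpa using hl, ?_⟩
      · exact List.isChain_cons.mpr ⟨fun y hy => by simp at hy; subst hy; exact hc' ▸ hac, hc⟩
      · intro x hx
        rcases List.mem_cons.mp hx with rfl | hx
        · exact ⟨Relation.ReflTransGen.refl, Relation.ReflTransGen.head hac hcb⟩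
        · exact ⟨Relation.ReflTransGen.head hac (hm x hx).1, (hm x hx).2⟩



section Main

variable {G : V → V → Prop} {s : V}

lemma dfs_no_tree_cycle (A : DFSArborescence G s) {x : V}
    (hx : Relation.ReflTransGen A.T s x) (hc : Relation.TransGen A.T x x) : False :=
  lt_irrefl _ (A.post_desc hx hc)

lemma dfs_sibling (A : DFSArborescence G s) {a b : V} (ha : A.T s a) (hb : A.T s b)
    (hab : a ≠ b) (h : Relation.ReflTransGen A.T a b) : False := by
  rcases h.cases_tail with rfl | ⟨w, haw, hwb⟩
  · exact hab rfl
  · have hws : w = s := A.unique_parent hwb hb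
    subst hws
    exact dfs_no_tree_cycle A Relation.ReflTransGen.refl (Relation.TransGen.head' ha haw)

lemma dfs_disj (A : DFSArborescence G s) {s1 s2 x : V} (h1 : A.T s s1) (h2 : A.T s s2)
    (h12 : s1 ≠ s2) (hx1 : Relation.ReflTransGen A.T s1 x)
    (hx2 : Relation.ReflTransGen A.T s2 x) : False := by
  rcases tree_comparable A.unique_parent hx1 hx2 with h | h
  · exact dfs_sibling A h1 h2 h12 h
  · exact dfs_sibling A h2 h1 h12.symm h

lemma dfs_nodup (A : DFSArborescence G s) {l : List V} (hc : l.Chain' A.T)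
    (hr : ∀ x ∈ l, Relation.ReflTransGen A.T s x) : l.Nodup := by
  haveI : IsTrans V (Relation.TransGen A.T) := ⟨fun _ _ _ => Relation.TransGen.trans⟩
  haveI : Trans (Relation.TransGen A.T) (Relation.TransGen A.T) (Relation.TransGen A.T) := ⟨Relation.TransGen.trans⟩
  have hpw : l.Pairwise (Relation.TransGen A.T) :=
    List.isChain_iff_pairwise.mp (hc.imp fun _ _ h => Relation.TransGen.single h)
  refine hpw.imp_of_mem ?_
  intro a b ha _ h hab
  subst hab
  exact dfs_no_tree_cycle A (hr a ha) h

end Main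


/-- If `u` and `v` lie in subarborescences rooted at distinct children of `s`,
then `s` is a junction of `u, v` in `G` and `s = LCA_{T_s}(u,v)`. -/
theorem stmt2 (G : V → V → Prop) (hG : Acyclic G) (s : V) (A : DFSArborescence G s)
    (s1 s2 : V) (h1 : A.T s s1) (h2 : A.T s s2) (h12 : s1 ≠ s2)
    (u v : V) (hu : Relation.ReflTransGen A.T s1 u)
    (hv : Relation.ReflTransGen A.T s2 v) :
    IsJunction G s u v ∧ IsTreeLCA A.T u v s := by
  have hsu : Relation.ReflTransGen A.T s u := Relation.ReflTransGen.head h1 hu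
  have hsv : Relation.ReflTransGen A.T s v := Relation.ReflTransGen.head h2 hv
  have hne : u ≠ v := fun h => dfs_disj A h1 h2 h12 hu (h ▸ hv)
  -- LCA part
  have anc : ∀ y, Relation.ReflTransGen A.T y u → Relation.ReflTransGen A.T y v →
      Relation.ReflTransGen A.T y s := by
    intro y hyu hyv
    rcases tree_comparable A.unique_parent hyu hsu with h | h
    · exact h
    · rcases h.cases_tail with rfl | ⟨w, hsw, hwy⟩
      · exact Relation.ReflTransGen.refl
      · have hsy : Relation.TransGen A.T s y := Relation.TransGen.tail' hsw hwy
        have sub1 : ∀ {c w'}, A.T s c → Relation.ReflTransGen A.T c w' →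
            Relation.ReflTransGen A.T y w' → Relation.ReflTransGen A.T c y := by
          intro c w' hc hcw hyw
          rcases tree_comparable A.unique_parent hyw hcw with h' | h'
          · rcases h'.cases_tail with rfl | ⟨w2, hyw2, hw2c⟩
            · exact Relation.ReflTransGen.refl
            · have : w2 = s := A.unique_parent hw2c hc
              subst this
              exact absurd (Relation.TransGen.trans_left hsy hyw2)
                (fun hcyc => dfs_no_tree_cycle A Relation.ReflTransGen.refl hcyc)
          · exact h'
        exact absurd (dfs_disj A h1 h2 h12 (sub1 h1 hu hyu) (sub1 h2 hv hyv)) id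
  -- Junction part
  obtain ⟨l1, hc1, hh1, hl1, hm1⟩ := exists_chain_list hu
  obtain ⟨l2, hc2, hh2, hl2, hm2⟩ := exists_chain_list hv
  have mem1 : ∀ x ∈ l1, Relation.ReflTransGen A.T s1 x := fun x hx => (hm1 x hx).1
  have mem2 : ∀ x ∈ l2, Relation.ReflTransGen A.T s2 x := fun x hx => (hm2 x hx).1
  have snm1 : s ∉ l1 := fun hs =>
    dfs_no_tree_cycle A Relation.ReflTransGen.refl
      (Relation.TransGen.head' h1 (mem1 s hs))
  have snm2 : s ∉ l2 := fun hs =>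
    dfs_no_tree_cycle A Relation.ReflTransGen.refl
      (Relation.TransGen.head' h2 (mem2 s hs))
  have path1 : IsDipath G (s :: l1) s u := by
    refine ⟨?_, rfl, ?_, ?_⟩
    · have chT : List.Chain' A.T (s :: l1) := by
        refine List.isChain_cons.mpr ⟨?_, hc1⟩
        intro y hy
        rw [hh1] at hy
        simp only [Option.mem_some_iff] at hy
        subst hy
        exact h1
      exact chT.imp fun _ _ h => A.sub h
    · cases l1 with
      | nil => simp at hh1
      | cons c t => rw [List.getLast?_cons_cons]; exact hl1
    · exact List.nodup_cons.mpr ⟨snm1, dfs_nodup A hc1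
        (fun x hx => Relation.ReflTransGen.head h1 (mem1 x hx))⟩
  have path2 : IsDipath G (s :: l2) s v := by
    refine ⟨?_, rfl, ?_, ?_⟩
    · have chT : List.Chain' A.T (s :: l2) := by
        refine List.isChain_cons.mpr ⟨?_, hc2⟩
        intro y hy
        rw [hh2] at hy
        simp only [Option.mem_some_iff] at hy
        subst hy
        exact h2
      exact chT.imp fun _ _ h => A.sub h
    · cases l2 with
      | nil => simp at hh2
      | cons c t => rw [List.getLast?_cons_cons]; exact hl2
    · exact List.nodup_cons.mpr ⟨snm2, dfs_nodup A hc2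
        (fun x hx => Relation.ReflTransGen.head h2 (mem2 x hx))⟩
  refine ⟨⟨hne, s :: l1, s :: l2, path1, path2, ?_⟩, hsu, hsv, anc⟩
  intro x hx hq
  rcases List.mem_cons.mp hx with rfl | hx
  · rfl
  · rcases List.mem_cons.mp hq with rfl | hq
    · rfl
    · exact absurd (dfs_disj A h1 h2 h12 (mem1 x hx) (mem2 x hq)) id
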